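/- The polynomial P(γ) = 450γ⁷ − 4860γ⁶ + 6432γ⁵ + 39111γ⁴ − 207817γ³ + 359749γ² − 275503γ + 110250 has exactly one real root in the interval (1,2], and this root lies in (77/50, 31/20). -/

import Mathlib

noncomputable def septicF : ℝ → ℝ := fun γ =>
  450 * γ ^ 7 - 4860 * γ ^ 6 + 6432 * γ ^ 5 + 39111 * γ ^ 4 - 207817 * γ ^ 3
    + 359749 * γ ^ 2 - 275503 * γ + 110250

lemma septicF_hasDerivAt (x : ℝ) :
    HasDerivAt septicF
      (3150 * x ^ 6 - 29160 * x ^ 5 + 32160 * x ^ 4 + 156444 * x ^ 3 - 623451 * x ^ 2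
        + 719498 * x - 275503) x := by
  have h := ((((((((hasDerivAt_pow 7 x).const_mul (450:ℝ)).sub
      ((hasDerivAt_pow 6 x).const_mul 4860)).add
      ((hasDerivAt_pow 5 x).const_mul 6432)).add
      ((hasDerivAt_pow 4 x).const_mul 39111)).sub
      ((hasDerivAt_pow 3 x).const_mul 207817)).add
      ((hasDerivAt_pow 2 x).const_mul 359749)).sub
      ((hasDerivAt_id x).const_mul 275503)).add_const 110250
  simp only [id_eq] at h
  convert h using 1
  · rfl
  · rfl
  · rfl
  · push_cast
    ring

lemma septicF_deriv_neg {x : ℝ} (h1 : 1 ≤ x) (h2 : x ≤ 2) :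
    3150 * x ^ 6 - 29160 * x ^ 5 + 32160 * x ^ 4 + 156444 * x ^ 3 - 623451 * x ^ 2
      + 719498 * x - 275503 < 0 := by
  nlinarith [sq_nonneg (x - 1), sq_nonneg (x - 2), mul_nonneg (sub_nonneg.2 h1) (sub_nonneg.2 h2),
    mul_nonneg (mul_nonneg (sub_nonneg.2 h1) (sub_nonneg.2 h1)) (sub_nonneg.2 (by linarith : x ≤ 2)),
    mul_nonneg (mul_nonneg (sub_nonneg.2 h1) (sub_nonneg.2 h1)) (sub_nonneg.2 h1),
    sq_nonneg ((x-1)*(x-2)), sq_nonneg ((x-1)^2*(2-x)), sq_nonneg (x^2 - 3*x + 2),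
    mul_nonneg (sq_nonneg (x-1)) (sub_nonneg.2 (by linarith : x ≤ 2)),
    mul_nonneg (mul_nonneg (sq_nonneg (x-1)) (sq_nonneg (x-1))) (sub_nonneg.2 (by linarith : x ≤ 2)),
    mul_nonneg (mul_nonneg (sq_nonneg (x-1)) (sq_nonneg (x-2))) (sub_nonneg.2 h1)]

lemma septicF_anti : StrictAntiOn septicF (Set.Icc 1 2) := by
  apply strictAntiOn_of_deriv_neg (convex_Icc 1 2)
  · exact (Continuous.continuousOn (by unfold septicF; continuity))
  · intro x hx
    rw [interior_Icc] at hx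
    rw [(septicF_hasDerivAt x).deriv]
    exact septicF_deriv_neg hx.1.le hx.2.le

lemma septicF_cont : Continuous septicF := by unfold septicF; continuity

theorem septic_unique_root :
    (∃! γ : ℝ, γ ∈ Set.Ioc (1 : ℝ) 2 ∧
      450 * γ ^ 7 - 4860 * γ ^ 6 + 6432 * γ ^ 5 + 39111 * γ ^ 4 - 207817 * γ ^ 3
        + 359749 * γ ^ 2 - 275503 * γ + 110250 = 0) ∧
    (∀ γ : ℝ, γ ∈ Set.Ioc (1 : ℝ) 2 →
      450 * γ ^ 7 - 4860 * γ ^ 6 + 6432 * γ ^ 5 + 39111 * γ ^ 4 - 207817 * γ ^ 3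
        + 359749 * γ ^ 2 - 275503 * γ + 110250 = 0 →
      77 / 50 < γ ∧ γ < 31 / 20) := by
  have hfa : septicF (77/50) = 4081579562837/15625000000 := by
    unfold septicF; norm_num
  have hfb : septicF (31/20) = -(20379796449/25600000) := by
    unfold septicF; norm_num
  have hab : (77/50 : ℝ) ≤ 31/20 := by norm_num
  have hamem : (77/50 : ℝ) ∈ Set.Icc (1:ℝ) 2 := by norm_num
  have hbmem : (31/20 : ℝ) ∈ Set.Icc (1:ℝ) 2 := by norm_num
  -- key: any root in Ioc 1 2 lies in Ioo (77/50) (31/20)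
  have key : ∀ γ : ℝ, γ ∈ Set.Ioc (1 : ℝ) 2 → septicF γ = 0 → 77/50 < γ ∧ γ < 31/20 := by
    intro γ hγ h0
    have hγmem : γ ∈ Set.Icc (1:ℝ) 2 := ⟨hγ.1.le, hγ.2⟩
    constructor
    · by_contra hle
      push_neg at hle
      rcases lt_or_eq_of_le hle with h | h
      · have := septicF_anti hγmem hamem h
        rw [h0, hfa] at this
        norm_num at this
      · rw [h, hfa] at h0; norm_num at h0
    · by_contra hle
      push_neg at hle
      rcases lt_or_eq_of_le hle with h | h
      · have := septicF_anti hbmem hγmem h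
        rw [h0, hfb] at this
        norm_num at this
      · rw [← h, hfb] at h0; norm_num at h0
  -- existence via IVT
  have hsub : Set.Ioo (septicF (31/20)) (septicF (77/50)) ⊆ septicF '' Set.Ioo (77/50) (31/20) :=
    intermediate_value_Ioo' hab septicF_cont.continuousOn
  have h0mem : (0:ℝ) ∈ Set.Ioo (septicF (31/20)) (septicF (77/50)) := by
    rw [hfa, hfb]; norm_num
  obtain ⟨c, hc, hc0⟩ := hsub h0mem
  have hcIoc : c ∈ Set.Ioc (1:ℝ) 2 := ⟨by linarith [hc.1] , by linarith [hc.2]⟩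
  refine ⟨⟨c, ⟨hcIoc, by simpa [septicF] using hc0⟩, ?_⟩, ?_⟩
  · rintro y ⟨hy, hy0⟩
    have hy0' : septicF y = 0 := by simpa [septicF] using hy0
    have hymem : y ∈ Set.Icc (1:ℝ) 2 := ⟨hy.1.le, hy.2⟩
    have hcmem : c ∈ Set.Icc (1:ℝ) 2 := ⟨hcIoc.1.le, hcIoc.2⟩
    exact septicF_anti.injOn hymem hcmem (by rw [hy0', hc0])
  · intro γ hγ h0
    exact key γ hγ (by simpa [septicF] using h0)
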